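/- Fix h ∈ Z^n with centroid h̄ as above and graph G_h. Order the edges (i,j) of G_h by the lexicographic order on the pairs (min(h̄_i,h̄_j), max(h̄_i,h̄_j)). For G ⊆ G_h connected and edge e=(i,j) of G_h, say e is (G,h)-active if i and j are joined by a path in the set of edges of G strictly greater than e; define Ψ_h(G) = G if no (G,h)-active edge exists, else Ψ_h(G) = G ⊕ e*_{G,h} for the least active edge e*_{G,h}. Then Ψ_h is an involution on the set of connected spanning subgraphs of G_h. -/

import Mathlib

open scoped Classical
open MeasureTheory

noncomputable section

def extv {α : Type*} [Zero α] {n : ℕ} (x : Fin n → α) : Fin (n + 1) → α :=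
  Fin.cases 0 x

/-- The centroid `h̄` of `h ∈ ℤ^n`: `h̄_i = h_i + i/(n+1)`, with the convention `h_0 = 0`. -/
def cent (n : ℕ) (h : Fin n → ℤ) : Fin (n + 1) → ℝ :=
  fun i => (extv h i : ℤ) + (i : ℝ) / (n + 1)

/-- The graph `G_h` on `{0, …, n}` whose edges are the pairs `(i,j)` with `|h̄_i - h̄_j| < 1`. -/
def Gh (n : ℕ) (h : Fin n → ℤ) : SimpleGraph (Fin (n + 1)) where
  Adj i j := i ≠ j ∧ |cent n h i - cent n h j| < 1
  symm := ⟨fun i j hij => ⟨hij.1.symm, by rw [abs_sub_comm]; exact hij.2⟩⟩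
  loopless := ⟨fun i hi => hi.1 rfl⟩

/-- The key of the pair `(i, j)`: the pair `(min(h̄_i, h̄_j), max(h̄_i, h̄_j))` with the
lexicographic order, along which edges of `G_h` are ordered. -/
def keyC (n : ℕ) (h : Fin n → ℤ) (p : Fin (n + 1) × Fin (n + 1)) : ℝ ×ₗ ℝ :=
  toLex (min (cent n h p.1) (cent n h p.2), max (cent n h p.1) (cent n h p.2))

/-- The subgraph of `G` consisting of the edges strictly greater than `e`. -/
def aboveC (n : ℕ) (h : Fin n → ℤ) (G : SimpleGraph (Fin (n + 1)))
    (e : Fin (n + 1) × Fin (n + 1)) : SimpleGraph (Fin (n + 1)) where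
  Adj a b := G.Adj a b ∧ keyC n h e < keyC n h (a, b)
  symm := by
    constructor
    intro a b hab
    refine ⟨hab.1.symm, ?_⟩
    have hk : keyC n h (a, b) = keyC n h (b, a) := by
      simp only [keyC]; rw [min_comm (cent n h a), max_comm (cent n h a)]
    rw [← hk]; exact hab.2
  loopless := ⟨fun a ha => G.loopless.irrefl a ha.1⟩

/-- An edge `e = (i, j)` of `G_h` (normalized so that `h̄_i < h̄_j`) is `(G, h)`-active if
`i` and `j` are joined by a path among the edges of `G` strictly greater than `e`. -/
def IsActiveC (n : ℕ) (h : Fin n → ℤ) (G : SimpleGraph (Fin (n + 1)))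
    (e : Fin (n + 1) × Fin (n + 1)) : Prop :=
  cent n h e.1 < cent n h e.2 ∧ (Gh n h).Adj e.1 e.2 ∧ (aboveC n h G e).Reachable e.1 e.2

/-- The finset of `(G, h)`-active edges. -/
def activeC (n : ℕ) (h : Fin n → ℤ) (G : SimpleGraph (Fin (n + 1))) :
    Finset (Fin (n + 1) × Fin (n + 1)) :=
  Finset.univ.filter (IsActiveC n h G)

/-- `G ⊕ e`: toggle the edge `e` (delete it if present, add it otherwise). -/
def toggleC {n : ℕ} (G : SimpleGraph (Fin (n + 1))) (e : Fin (n + 1) × Fin (n + 1)) :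
    SimpleGraph (Fin (n + 1)) :=
  if G.Adj e.1 e.2 then G.deleteEdges {s(e.1, e.2)}
  else G ⊔ SimpleGraph.fromEdgeSet {s(e.1, e.2)}

/-- The map `Ψ_h`: toggle the least `(G, h)`-active edge, if any. -/
def PsiH (n : ℕ) (h : Fin n → ℤ) (G : SimpleGraph (Fin (n + 1))) :
    SimpleGraph (Fin (n + 1)) :=
  if hne : (activeC n h G).Nonempty then
    toggleC G (Finset.exists_min_image (activeC n h G) (keyC n h) hne).choose
  else G

/-- The index `i_0` of the least coordinate of the centroid `h̄`. -/
def idxMin (n : ℕ) (h : Fin n → ℤ) : Fin (n + 1) :=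
  (Finite.exists_min (cent n h)).choose

/-- An `h`-increasing tree on `{0, …, n}`: a spanning tree of `G_h` such that `h̄` strictly
increases along every simple path starting at the vertex `i_0` minimizing `h̄`. -/
def IsIncTree (n : ℕ) (h : Fin n → ℤ) (T : SimpleGraph (Fin (n + 1))) : Prop :=
  T.IsTree ∧ T ≤ Gh n h ∧
    ∀ (v : Fin (n + 1)) (p : T.Walk (idxMin n h) v), p.IsPath →
      List.Chain' (fun a b => cent n h a < cent n h b) p.support

end

section Aux

variable {n : ℕ} {h : Fin n → ℤ}

lemma cent_inj : Function.Injective (cent n h) := by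
  intro i j hij
  unfold cent at hij
  have hn : (0:ℝ) < n + 1 := by positivity
  have h1 : ((extv h j - extv h i : ℤ) : ℝ) * (n + 1) = (i : ℝ) - (j : ℝ) := by
    have h2 : ((extv h i : ℤ) : ℝ) * (n+1) + i = ((extv h j : ℤ) : ℝ) * (n+1) + j := by
      field_simp at hij; linarith
    push_cast
    linarith
  have hi' : (i : ℝ) < n + 1 := by exact_mod_cast i.isLt
  have hj' : (j : ℝ) < n + 1 := by exact_mod_cast j.isLt
  have hi0 : (0:ℝ) ≤ (i:ℝ) := by positivity
  have hj0 : (0:ℝ) ≤ (j:ℝ) := by positivity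
  have h2 : |(i : ℝ) - (j : ℝ)| < n + 1 := abs_sub_lt_iff.mpr ⟨by linarith, by linarith⟩
  have habs : |((extv h j - extv h i : ℤ) : ℝ)| * (n+1) < n + 1 := by
    calc |((extv h j - extv h i : ℤ) : ℝ)| * (n+1)
        = |((extv h j - extv h i : ℤ) : ℝ) * (n+1)| := by rw [abs_mul, abs_of_pos hn]
      _ = |(i : ℝ) - (j : ℝ)| := by rw [h1]
      _ < n + 1 := h2
  have : |((extv h j - extv h i : ℤ) : ℝ)| < 1 := by
    by_contra hc
    push_neg at hc
    nlinarith
  have hz : extv h j - extv h i = 0 := by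
    rw [← Int.cast_abs] at this
    exact Int.abs_lt_one_iff.mp (by exact_mod_cast this)
  rw [hz] at h1
  simp at h1
  have hij2 : (i : ℝ) = (j : ℝ) := by linarith
  exact Fin.ext (by exact_mod_cast hij2)


lemma keyC_symm (a b : Fin (n+1)) : keyC n h (a, b) = keyC n h (b, a) := by
  simp only [keyC]; rw [min_comm (cent n h a), max_comm (cent n h a)]

lemma keyC_eq_of_sym2 {a b c d : Fin (n+1)} (hs : s(a, b) = s(c, d)) :
    keyC n h (a, b) = keyC n h (c, d) := by
  rw [Sym2.eq_iff] at hs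
  rcases hs with ⟨rfl, rfl⟩ | ⟨rfl, rfl⟩
  · rfl
  · exact keyC_symm a b

lemma keyC_inj {p q : Fin (n+1) × Fin (n+1)} (hp : cent n h p.1 < cent n h p.2)
    (hq : cent n h q.1 < cent n h q.2) (hk : keyC n h p = keyC n h q) : p = q := by
  simp only [keyC, toLex_inj, Prod.mk.injEq] at hk
  rw [min_eq_left hp.le, min_eq_left hq.le, max_eq_right hp.le, max_eq_right hq.le] at hk
  exact Prod.ext (cent_inj hk.1) (cent_inj hk.2)

lemma toggleC_adj_ne {G : SimpleGraph (Fin (n+1))} {e : Fin (n+1) × Fin (n+1)}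
    {a b : Fin (n+1)} (hs : s(a, b) ≠ s(e.1, e.2)) :
    (toggleC G e).Adj a b ↔ G.Adj a b := by
  unfold toggleC
  split_ifs with hA
  · simp [SimpleGraph.deleteEdges_adj, hs]
  · simp only [SimpleGraph.sup_adj, SimpleGraph.fromEdgeSet_adj, Set.mem_singleton_iff]
    constructor
    · rintro (hg | ⟨hmem, _⟩)
      · exact hg
      · exact absurd hmem hs
    · exact Or.inl

lemma toggleC_adj_self {G : SimpleGraph (Fin (n+1))} {e : Fin (n+1) × Fin (n+1)}
    (he : e.1 ≠ e.2) {a b : Fin (n+1)} (hs : s(a, b) = s(e.1, e.2)) :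
    (toggleC G e).Adj a b ↔ ¬ G.Adj a b := by
  have hab : a ≠ b := by
    rw [Sym2.eq_iff] at hs
    rcases hs with ⟨rfl, rfl⟩ | ⟨rfl, rfl⟩
    · exact he
    · exact he.symm
  have hGe : G.Adj a b ↔ G.Adj e.1 e.2 := by
    rw [Sym2.eq_iff] at hs
    rcases hs with ⟨rfl, rfl⟩ | ⟨rfl, rfl⟩
    · exact Iff.rfl
    · exact ⟨SimpleGraph.Adj.symm, SimpleGraph.Adj.symm⟩
  unfold toggleC
  split_ifs with hA
  · simp [SimpleGraph.deleteEdges_adj, hs, hGe, hA]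
  · simp [SimpleGraph.sup_adj, SimpleGraph.fromEdgeSet_adj, hs, hab, hGe, hA]

lemma toggleC_toggleC {G : SimpleGraph (Fin (n+1))} {e : Fin (n+1) × Fin (n+1)}
    (he : e.1 ≠ e.2) : toggleC (toggleC G e) e = G := by
  ext a b
  by_cases hs : s(a, b) = s(e.1, e.2)
  · rw [toggleC_adj_self he hs, toggleC_adj_self he hs, not_not]
  · rw [toggleC_adj_ne hs, toggleC_adj_ne hs]

/-- Transfer of reachability along an edge substitution. -/
lemma reach_transfer {V : Type*} {A B : SimpleGraph V} {u v : V}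
    (hAB : ∀ a b, A.Adj a b → B.Adj a b ∨ s(a, b) = s(u, v))
    (huv : B.Reachable u v) {x y : V} (hxy : A.Reachable x y) : B.Reachable x y := by
  obtain ⟨p⟩ := hxy
  induction p with
  | nil => exact SimpleGraph.Reachable.refl _
  | cons hadj p ih =>
    rcases hAB _ _ hadj with hB | hs
    · exact hB.reachable.trans ih
    · rw [Sym2.eq_iff] at hs
      rcases hs with ⟨rfl, rfl⟩ | ⟨rfl, rfl⟩
      · exact huv.trans ih
      · exact huv.symm.trans ih

lemma aboveC_mono {G : SimpleGraph (Fin (n+1))} {e f : Fin (n+1) × Fin (n+1)}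
    (hef : keyC n h f ≤ keyC n h e) : aboveC n h G e ≤ aboveC n h G f :=
  fun _ _ hab => ⟨hab.1, lt_of_le_of_lt hef hab.2⟩

lemma aboveC_toggle {G : SimpleGraph (Fin (n+1))} {e f : Fin (n+1) × Fin (n+1)}
    (hef : keyC n h e ≤ keyC n h f) :
    aboveC n h (toggleC G e) f = aboveC n h G f := by
  ext a b
  show (toggleC G e).Adj a b ∧ _ ↔ G.Adj a b ∧ _
  constructor <;> rintro ⟨h1, h2⟩ <;> refine ⟨?_, h2⟩
  · rwa [toggleC_adj_ne (fun hs => absurd (keyC_eq_of_sym2 (h := h) hs)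
      (ne_of_gt (lt_of_le_of_lt hef h2))) ] at h1
  · rwa [toggleC_adj_ne (fun hs => absurd (keyC_eq_of_sym2 (h := h) hs)
      (ne_of_gt (lt_of_le_of_lt hef h2)))]

lemma mem_activeC {G : SimpleGraph (Fin (n+1))} {e : Fin (n+1) × Fin (n+1)} :
    e ∈ activeC n h G ↔ IsActiveC n h G e := by
  simp [activeC]


lemma active_min_toggle {G : SimpleGraph (Fin (n+1))} {e : Fin (n+1) × Fin (n+1)}
    (he : IsActiveC n h G e) (hmin : ∀ f ∈ activeC n h G, keyC n h e ≤ keyC n h f)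
    {f : Fin (n+1) × Fin (n+1)} (hf : IsActiveC n h (toggleC G e) f) :
    keyC n h e ≤ keyC n h f := by
  by_contra hlt
  push_neg at hlt
  have huv : (aboveC n h G f).Reachable e.1 e.2 :=
    he.2.2.mono (aboveC_mono hlt.le)
  have hAB : ∀ a b, (aboveC n h (toggleC G e) f).Adj a b →
      (aboveC n h G f).Adj a b ∨ s(a, b) = s(e.1, e.2) := by
    intro a b hab
    by_cases hs : s(a, b) = s(e.1, e.2)
    · exact Or.inr hs
    · exact Or.inl ⟨(toggleC_adj_ne hs).mp hab.1, hab.2⟩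
  have hreach : (aboveC n h G f).Reachable f.1 f.2 :=
    reach_transfer hAB huv hf.2.2
  have : f ∈ activeC n h G := mem_activeC.mpr ⟨hf.1, hf.2.1, hreach⟩
  exact absurd (hmin f this) (not_le.mpr hlt)

lemma psiH_toggle {G : SimpleGraph (Fin (n+1))} {e : Fin (n+1) × Fin (n+1)}
    (he : IsActiveC n h G e) (hmin : ∀ f ∈ activeC n h G, keyC n h e ≤ keyC n h f) :
    PsiH n h (toggleC G e) = G := by
  have he12 : e.1 ≠ e.2 := fun hq => absurd he.1 (hq ▸ lt_irrefl _)
  have he' : IsActiveC n h (toggleC G e) e :=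
    ⟨he.1, he.2.1, by rw [aboveC_toggle le_rfl]; exact he.2.2⟩
  have hne' : (activeC n h (toggleC G e)).Nonempty := ⟨e, mem_activeC.mpr he'⟩
  rw [PsiH, dif_pos hne']
  have spec := (Finset.exists_min_image (activeC n h (toggleC G e)) (keyC n h) hne').choose_spec
  set e' := (Finset.exists_min_image (activeC n h (toggleC G e)) (keyC n h) hne').choose with he'def
  have hact' : IsActiveC n h (toggleC G e) e' := mem_activeC.mp spec.1
  have h1 : keyC n h e ≤ keyC n h e' := active_min_toggle he hmin hact'
  have h2 : keyC n h e' ≤ keyC n h e := spec.2 e (mem_activeC.mpr he')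
  have hee : e' = e := keyC_inj hact'.1 he.1 (le_antisymm h2 h1)
  rw [hee, toggleC_toggleC he12]

end Aux


/-- `Ψ_h` is an involution on the set of connected spanning subgraphs of `G_h`. -/
theorem psiH_involution (n : ℕ) (h : Fin n → ℤ) (G : SimpleGraph (Fin (n + 1)))
    (hG1 : G ≤ Gh n h) (hG2 : G.Connected) :
    PsiH n h G ≤ Gh n h ∧ (PsiH n h G).Connected ∧ PsiH n h (PsiH n h G) = G := by
  by_cases hne : (activeC n h G).Nonempty
  · have hpsi : PsiH n h G =
        toggleC G (Finset.exists_min_image (activeC n h G) (keyC n h) hne).choose := by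
      rw [PsiH, dif_pos hne]
    have spec := (Finset.exists_min_image (activeC n h G) (keyC n h) hne).choose_spec
    set e := (Finset.exists_min_image (activeC n h G) (keyC n h) hne).choose with hedef
    have he : IsActiveC n h G e := mem_activeC.mp spec.1
    have he12 : e.1 ≠ e.2 := fun hq => absurd he.1 (hq ▸ lt_irrefl _)
    rw [hpsi]
    refine ⟨?_, ?_, psiH_toggle he spec.2⟩
    · rw [toggleC]
      split_ifs with hA
      · exact le_trans (SimpleGraph.deleteEdges_le _) hG1
      · refine sup_le hG1 ?_
        intro a b hab
        rw [SimpleGraph.fromEdgeSet_adj, Set.mem_singleton_iff] at hab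
        obtain ⟨hs, -⟩ := hab
        rw [Sym2.eq_iff] at hs
        rcases hs with ⟨rfl, rfl⟩ | ⟨rfl, rfl⟩
        · exact he.2.1
        · exact he.2.1.symm
    · by_cases hA : G.Adj e.1 e.2
      · rw [toggleC, if_pos hA]
        have hsub : aboveC n h G e ≤ G.deleteEdges {s(e.1, e.2)} := by
          intro a b hab
          rw [SimpleGraph.deleteEdges_adj]
          refine ⟨hab.1, ?_⟩
          simp only [Set.mem_singleton_iff]
          exact fun hs => absurd (keyC_eq_of_sym2 (h := h) hs) (ne_of_gt hab.2)
        have hreach : (G.deleteEdges {s(e.1, e.2)}).Reachable e.1 e.2 :=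
          he.2.2.mono hsub
        have hAB : ∀ a b, G.Adj a b →
            (G.deleteEdges {s(e.1, e.2)}).Adj a b ∨ s(a, b) = s(e.1, e.2) := by
          intro a b hab
          by_cases hs : s(a, b) = s(e.1, e.2)
          · exact Or.inr hs
          · exact Or.inl (by rw [SimpleGraph.deleteEdges_adj]; simpa [hs] using hab)
        exact SimpleGraph.Connected.mk fun x y => reach_transfer hAB hreach (hG2.preconnected x y)
      · rw [toggleC, if_neg hA]
        exact hG2.mono le_sup_left
  · have hpsi : PsiH n h G = G := by rw [PsiH, dif_neg hne]
    rw [hpsi]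
    exact ⟨hG1, hG2, hpsi⟩
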